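/- Let f : Ω × X → X be a random map on a compact metric space such that for all x, y in X, d(f_ω^n(x), f_ω^n(y)) → 0 as n → ∞ for ℙ-almost every ω (synchronization). Then f admits at most one stationary probability measure. -/
import Mathlib

open MeasureTheory Filter

/-- Iterated compositions `f_ω^n = f_{ω_{n-1}} ∘ ⋯ ∘ f_{ω_0}` of a random map. -/
def iterRM {T X : Type*} (f : T → X → X) (ω : ℕ → T) : ℕ → X → X
  | 0 => id
  | n + 1 => f (ω n) ∘ iterRM f ω n

lemma iterRM_cont {T X : Type*} [TopologicalSpace X] {f : T → X → X}
    (hf : ∀ t, Continuous (f t)) (ω : ℕ → T) (n : ℕ) : Continuous (iterRM f ω n) := by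
  induction n with
  | zero => exact continuous_id
  | succ n ih => exact (hf _).comp ih

lemma iterRM_meas {T X : Type*} [MeasurableSpace T] [MeasurableSpace X]
    {f : T → X → X} (hfmeas : Measurable (Function.uncurry f)) (n : ℕ) :
    Measurable (fun q : (ℕ → T) × X => iterRM f q.1 n q.2) := by
  induction n with
  | zero => exact measurable_snd
  | succ n ih =>
    have h : (fun q : (ℕ → T) × X => iterRM f q.1 (n+1) q.2)
        = fun q => Function.uncurry f (q.1 n, iterRM f q.1 n q.2) := rfl
    rw [h]
    exact hfmeas.comp (((measurable_pi_apply n).comp measurable_fst).prodMk ih)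

lemma iterRM_tail {T X : Type*} (f : T → X → X) (ω : ℕ → T) (n : ℕ) (x : X) :
    iterRM f ω (n+1) x = iterRM f (fun k => ω (k+1)) n (f (ω 0) x) := by
  induction n with
  | zero => rfl
  | succ n ih =>
    show f (ω (n+1)) (iterRM f ω (n+1) x) = _
    rw [ih]; rfl

lemma integrable_of_bound {α : Type*} [MeasurableSpace α] (μ : Measure α) [IsFiniteMeasure μ]
    {g : α → ℝ} (hm : AEStronglyMeasurable g μ) (C : ℝ) (hC : ∀ a, ‖g a‖ ≤ C) :
    Integrable g μ :=
  Integrable.mono' (integrable_const C) hm (Filter.Eventually.of_forall hC)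

lemma norm_integral_le_of_bound {α : Type*} [MeasurableSpace α] (μ : Measure α)
    [IsProbabilityMeasure μ] (g : α → ℝ) (C : ℝ) (hC : ∀ a, ‖g a‖ ≤ C) :
    ‖∫ a, g a ∂μ‖ ≤ C := by
  have := norm_integral_le_of_norm_le_const (μ := μ) (f := g) (C := C)
    (Filter.Eventually.of_forall hC)
  simpa using this

lemma tendsto_dist_comp_of_uniformContinuous {X Y : Type*} [MetricSpace X] [MetricSpace Y]
    {g : X → Y} (hg : UniformContinuous g) {a b : ℕ → X}
    (h : Tendsto (fun n => dist (a n) (b n)) atTop (nhds 0)) :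
    Tendsto (fun n => dist (g (a n)) (g (b n))) atTop (nhds 0) := by
  rw [Metric.tendsto_atTop] at h ⊢
  intro ε hε
  obtain ⟨δ, hδ, hδ'⟩ := Metric.uniformContinuous_iff.mp hg ε hε
  obtain ⟨N, hN⟩ := h δ hδ
  refine ⟨N, fun n hn => ?_⟩
  have h1 := hN n hn
  rw [Real.dist_eq, sub_zero, abs_of_nonneg dist_nonneg] at h1 ⊢
  exact hδ' h1

/-- Iterated stationarity: `∫∫ φ(f_ω^n x) dμ dℙ = ∫ φ dμ`. -/
lemma iter_stationary {T : Type*} [MeasurableSpace T]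
    {X : Type*} [MetricSpace X] [CompactSpace X] [MeasurableSpace X] [BorelSpace X]
    (p : MeasureTheory.Measure T) [IsProbabilityMeasure p]
    (ℙ : MeasureTheory.Measure (ℕ → T)) [IsProbabilityMeasure ℙ]
    (hbern : MeasureTheory.Measure.map (fun ω => (ω 0, fun n => ω (n + 1))) ℙ
      = p.prod ℙ)
    (f : T → X → X) (hf : ∀ t, Continuous (f t))
    (hfmeas : Measurable (Function.uncurry f))
    (μ : MeasureTheory.Measure X) [IsProbabilityMeasure μ]
    (hμ : ∀ φ : C(X, ℝ), ∫ ω, ∫ x, φ (f (ω 0) x) ∂μ ∂ℙ = ∫ x, φ x ∂μ)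
    (φ : C(X, ℝ)) : ∀ n : ℕ,
    ∫ ω, ∫ x, φ (iterRM f ω n x) ∂μ ∂ℙ = ∫ x, φ x ∂μ := by
  have hpair : Measurable (fun ω : ℕ → T => (ω 0, fun n => ω (n + 1))) :=
    (measurable_pi_apply 0).prodMk (measurable_pi_lambda _ fun n => measurable_pi_apply (n+1))
  have hp : Measure.map (fun ω : ℕ → T => ω 0) ℙ = p := by
    have h0 : (fun ω : ℕ → T => ω 0)
        = Prod.fst ∘ (fun ω : ℕ → T => (ω 0, fun n => ω (n + 1))) := rfl
    rw [h0, ← Measure.map_map measurable_fst hpair, hbern, Measure.map_fst_prod]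
    simp
  have hφbd : ∀ x : X, ‖φ x‖ ≤ ‖φ‖ := fun x => φ.norm_coe_le_norm x
  intro n
  induction n with
  | zero =>
    simp [iterRM]
  | succ n ih =>
    set G : T × (ℕ → T) → ℝ := fun q => ∫ x, φ (iterRM f q.2 n (f q.1 x)) ∂μ with hG
    have hGmeas : StronglyMeasurable G := by
      have hm : Measurable (fun qx : (T × (ℕ → T)) × X =>
          φ (iterRM f qx.1.2 n (f qx.1.1 qx.2))) := by
        apply φ.continuous.measurable.comp
        exact (iterRM_meas hfmeas n).comp
          ((measurable_snd.comp measurable_fst).prodMk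
            (hfmeas.comp ((measurable_fst.comp measurable_fst).prodMk measurable_snd)))
      exact hm.stronglyMeasurable.integral_prod_right'
    have hGbd : ∀ q, ‖G q‖ ≤ ‖φ‖ := fun q =>
      norm_integral_le_of_bound μ _ ‖φ‖ (fun x => hφbd _)
    have hGint : Integrable G (p.prod ℙ) :=
      integrable_of_bound _ hGmeas.aestronglyMeasurable ‖φ‖ hGbd
    have step1 : ∫ q, G q ∂(p.prod ℙ) = ∫ ω, G (ω 0, fun k => ω (k+1)) ∂ℙ := by
      rw [← hbern, integral_map hpair.aemeasurable hGmeas.aestronglyMeasurable]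
    have step2 : ∫ q, G q ∂(p.prod ℙ) = ∫ ω', ∫ t, G (t, ω') ∂p ∂ℙ :=
      integral_prod_symm G hGint
    have step3 : ∀ ω' : ℕ → T, ∫ t, G (t, ω') ∂p = ∫ x, φ (iterRM f ω' n x) ∂μ := by
      intro ω'
      have hH : StronglyMeasurable (fun t : T => G (t, ω')) := by
        have hm : Measurable (fun tx : T × X => φ (iterRM f ω' n (f tx.1 tx.2))) :=
          φ.continuous.measurable.comp
            (((iterRM_cont hf ω' n).measurable).comp hfmeas)
        exact hm.stronglyMeasurable.integral_prod_right'
      rw [← hp, integral_map (measurable_pi_apply 0).aemeasurable hH.aestronglyMeasurable]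
      exact hμ ⟨fun x => φ (iterRM f ω' n x), φ.continuous.comp (iterRM_cont hf ω' n)⟩
    have lhs_eq : ∫ ω, ∫ x, φ (iterRM f ω (n+1) x) ∂μ ∂ℙ
        = ∫ ω, G (ω 0, fun k => ω (k+1)) ∂ℙ := by
      congr 1; funext ω; congr 1; funext x
      rw [iterRM_tail]
    rw [lhs_eq, ← step1, step2]
    simp_rw [step3]
    exact ih

/-- Synchronization implies unique ergodicity: if `f` is a random map on a compact metric
space, driven by a Bernoulli product measure `ℙ = p^ℕ`, such that for all `x, y` the
distance `d(f_ω^n x, f_ω^n y) → 0` for `ℙ`-a.e. `ω`, then `f` admits at most one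
stationary probability measure. -/
theorem synchronizing_implies_unique_stationary
    {T : Type*} [MeasurableSpace T]
    {X : Type*} [MetricSpace X] [CompactSpace X] [MeasurableSpace X] [BorelSpace X]
    (p : MeasureTheory.Measure T) [IsProbabilityMeasure p]
    (ℙ : MeasureTheory.Measure (ℕ → T)) [IsProbabilityMeasure ℙ]
    (hbern : MeasureTheory.Measure.map (fun ω => (ω 0, fun n => ω (n + 1))) ℙ
      = p.prod ℙ)
    (f : T → X → X) (hf : ∀ t, Continuous (f t))
    (hfmeas : Measurable (Function.uncurry f))
    (hsync : ∀ x y : X, ∀ᵐ ω ∂ℙ,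
      Tendsto (fun n => dist (iterRM f ω n x) (iterRM f ω n y)) atTop (nhds 0))
    (μ ν : MeasureTheory.Measure X) [IsProbabilityMeasure μ] [IsProbabilityMeasure ν]
    (hμ : ∀ φ : C(X, ℝ), ∫ ω, ∫ x, φ (f (ω 0) x) ∂μ ∂ℙ = ∫ x, φ x ∂μ)
    (hν : ∀ φ : C(X, ℝ), ∫ ω, ∫ x, φ (f (ω 0) x) ∂ν ∂ℙ = ∫ x, φ x ∂ν) :
    μ = ν := by
  -- The set of (ω, (x, y)) that synchronize is measurable.
  have hdistmeas : ∀ n : ℕ, Measurable (fun q : (ℕ → T) × (X × X) =>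
      dist (iterRM f q.1 n q.2.1) (iterRM f q.1 n q.2.2)) := fun n =>
    Measurable.dist
      ((iterRM_meas hfmeas n).comp (measurable_fst.prodMk (measurable_fst.comp measurable_snd)))
      ((iterRM_meas hfmeas n).comp (measurable_fst.prodMk (measurable_snd.comp measurable_snd)))
  set S : Set ((ℕ → T) × (X × X)) := {q | Tendsto (fun n =>
      dist (iterRM f q.1 n q.2.1) (iterRM f q.1 n q.2.2)) atTop (nhds 0)} with hSdef
  have hSmeas : MeasurableSet S :=
    measurableSet_tendsto (nhds 0) hdistmeas
  -- For ℙ-a.e. ω, synchronization holds for μ×ν-a.e. (x, y).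
  have hS2 : ∀ᵐ q ∂((μ.prod ν).prod ℙ), (q.2, q.1) ∈ S := by
    exact (Measure.ae_prod_iff_ae_ae (p := fun q : (X × X) × (ℕ → T) => (q.2, q.1) ∈ S)
      (hSmeas.preimage measurable_swap)).mpr
      (Filter.Eventually.of_forall fun z => hsync z.1 z.2)
  have hS3 : ∀ᵐ q ∂(ℙ.prod (μ.prod ν)), q ∈ S := by
    rw [← Measure.prod_swap]
    exact (ae_map_iff measurable_swap.aemeasurable hSmeas).mpr hS2
  have hS4 : ∀ᵐ ω ∂ℙ, ∀ᵐ z ∂(μ.prod ν), (ω, z) ∈ S := Measure.ae_ae_of_ae_prod hS3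
  -- Main claim: integrals of continuous functions agree.
  have hkey : ∀ φ : C(X, ℝ), ∫ x, φ x ∂μ = ∫ x, φ x ∂ν := by
    intro φ
    have hφbd : ∀ x : X, ‖φ x‖ ≤ ‖φ‖ := fun x => φ.norm_coe_le_norm x
    have hφuc : UniformContinuous φ := CompactSpace.uniformContinuous_of_continuous φ.continuous
    -- the joint integrand measurability
    have hFmeas : ∀ n : ℕ, Measurable (fun q : (ℕ → T) × (X × X) =>
        ‖φ (iterRM f q.1 n q.2.1) - φ (iterRM f q.1 n q.2.2)‖) := by
      intro n
      apply Measurable.norm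
      exact Measurable.sub
        (φ.continuous.measurable.comp ((iterRM_meas hfmeas n).comp
          (measurable_fst.prodMk (measurable_fst.comp measurable_snd))))
        (φ.continuous.measurable.comp ((iterRM_meas hfmeas n).comp
          (measurable_fst.prodMk (measurable_snd.comp measurable_snd))))
    set h : ℕ → (ℕ → T) → ℝ := fun n ω =>
      ∫ z, ‖φ (iterRM f ω n z.1) - φ (iterRM f ω n z.2)‖ ∂(μ.prod ν) with hhdef
    have hhmeas : ∀ n, StronglyMeasurable (h n) := fun n =>
      ((hFmeas n).stronglyMeasurable).integral_prod_right'
    have hhbd : ∀ n ω, ‖h n ω‖ ≤ 2 * ‖φ‖ := by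
      intro n ω
      apply norm_integral_le_of_bound
      intro z
      rw [norm_norm]
      calc ‖φ (iterRM f ω n z.1) - φ (iterRM f ω n z.2)‖
          ≤ ‖φ (iterRM f ω n z.1)‖ + ‖φ (iterRM f ω n z.2)‖ := norm_sub_le _ _
        _ ≤ ‖φ‖ + ‖φ‖ := add_le_add (hφbd _) (hφbd _)
        _ = 2 * ‖φ‖ := by ring
    -- a.e. ω, h n ω → 0
    have hh0 : ∀ᵐ ω ∂ℙ, Tendsto (fun n => h n ω) atTop (nhds 0) := by
      filter_upwards [hS4] with ω hω
      have lim0 : (0 : ℝ) = ∫ z, (0 : ℝ) ∂(μ.prod ν) := by simp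
      rw [lim0]
      apply tendsto_integral_of_dominated_convergence (fun _ => 2 * ‖φ‖)
      · intro n
        exact ((hFmeas n).comp (measurable_prodMk_left (m := inferInstance))).aestronglyMeasurable
      · exact integrable_const _
      · intro n
        filter_upwards with z
        rw [norm_norm]
        calc ‖φ (iterRM f ω n z.1) - φ (iterRM f ω n z.2)‖
            ≤ ‖φ (iterRM f ω n z.1)‖ + ‖φ (iterRM f ω n z.2)‖ := norm_sub_le _ _
          _ ≤ ‖φ‖ + ‖φ‖ := add_le_add (hφbd _) (hφbd _)
          _ = 2 * ‖φ‖ := by ring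
      · filter_upwards [hω] with z hz
        have := tendsto_dist_comp_of_uniformContinuous hφuc hz
        simpa [Real.dist_eq] using this
    -- The bound: |∫φdμ - ∫φdν| ≤ ∫ h n dℙ for each n
    have hbound : ∀ n : ℕ, ‖∫ x, φ x ∂μ - ∫ x, φ x ∂ν‖ ≤ ∫ ω, h n ω ∂ℙ := by
      intro n
      have hμn := iter_stationary p ℙ hbern f hf hfmeas μ hμ φ n
      have hνn := iter_stationary p ℙ hbern f hf hfmeas ν hν φ n
      -- pointwise: |∫φ(F x)dμ - ∫φ(F y)dν| ≤ h n ω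
      have hpt : ∀ ω : ℕ → T,
          ‖(∫ x, φ (iterRM f ω n x) ∂μ) - ∫ y, φ (iterRM f ω n y) ∂ν‖ ≤ h n ω := by
        intro ω
        have hcont : Continuous (iterRM f ω n) := iterRM_cont hf ω n
        have hint1 : Integrable (fun z : X × X => φ (iterRM f ω n z.1)) (μ.prod ν) :=
          integrable_of_bound _ ((φ.continuous.comp hcont).comp
            continuous_fst).measurable.aestronglyMeasurable ‖φ‖ (fun z => hφbd _)
        have hint2 : Integrable (fun z : X × X => φ (iterRM f ω n z.2)) (μ.prod ν) :=
          integrable_of_bound _ ((φ.continuous.comp hcont).comp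
            continuous_snd).measurable.aestronglyMeasurable ‖φ‖ (fun z => hφbd _)
        have e1 : ∫ z : X × X, φ (iterRM f ω n z.1) ∂(μ.prod ν)
            = ∫ x, φ (iterRM f ω n x) ∂μ := by
          rw [integral_prod _ hint1]; simp
        have e2 : ∫ z : X × X, φ (iterRM f ω n z.2) ∂(μ.prod ν)
            = ∫ y, φ (iterRM f ω n y) ∂ν := by
          rw [integral_prod _ hint2]; simp
        rw [← e1, ← e2, ← integral_sub hint1 hint2]
        exact norm_integral_le_integral_norm _
      -- integrability of the ω-functions
      have hIμmeas : StronglyMeasurable (fun ω => ∫ x, φ (iterRM f ω n x) ∂μ) := by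
        have hm : Measurable (fun q : (ℕ → T) × X => φ (iterRM f q.1 n q.2)) :=
          φ.continuous.measurable.comp (iterRM_meas hfmeas n)
        exact hm.stronglyMeasurable.integral_prod_right'
      have hIνmeas : StronglyMeasurable (fun ω => ∫ y, φ (iterRM f ω n y) ∂ν) := by
        have hm : Measurable (fun q : (ℕ → T) × X => φ (iterRM f q.1 n q.2)) :=
          φ.continuous.measurable.comp (iterRM_meas hfmeas n)
        exact hm.stronglyMeasurable.integral_prod_right'
      have hIμint : Integrable (fun ω => ∫ x, φ (iterRM f ω n x) ∂μ) ℙ :=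
        integrable_of_bound _ hIμmeas.aestronglyMeasurable ‖φ‖
          (fun ω => norm_integral_le_of_bound μ _ ‖φ‖ (fun x => hφbd _))
      have hIνint : Integrable (fun ω => ∫ y, φ (iterRM f ω n y) ∂ν) ℙ :=
        integrable_of_bound _ hIνmeas.aestronglyMeasurable ‖φ‖
          (fun ω => norm_integral_le_of_bound ν _ ‖φ‖ (fun x => hφbd _))
      have hhint : Integrable (h n) ℙ :=
        integrable_of_bound _ (hhmeas n).aestronglyMeasurable (2 * ‖φ‖) (hhbd n)
      calc ‖∫ x, φ x ∂μ - ∫ x, φ x ∂ν‖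
          = ‖∫ ω, ((∫ x, φ (iterRM f ω n x) ∂μ) - ∫ y, φ (iterRM f ω n y) ∂ν) ∂ℙ‖ := by
            rw [integral_sub hIμint hIνint, hμn, hνn]
        _ ≤ ∫ ω, ‖(∫ x, φ (iterRM f ω n x) ∂μ) - ∫ y, φ (iterRM f ω n y) ∂ν‖ ∂ℙ :=
            norm_integral_le_integral_norm _
        _ ≤ ∫ ω, h n ω ∂ℙ := by
            apply integral_mono ((hIμint.sub hIνint).norm) hhint
            intro ω; exact hpt ω
    -- ∫ h n dℙ → 0
    have hlim : Tendsto (fun n => ∫ ω, h n ω ∂ℙ) atTop (nhds 0) := by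
      have lim0 : (0 : ℝ) = ∫ ω, (0 : ℝ) ∂ℙ := by simp
      rw [lim0]
      apply tendsto_integral_of_dominated_convergence (fun _ => 2 * ‖φ‖)
      · exact fun n => (hhmeas n).aestronglyMeasurable
      · exact integrable_const _
      · exact fun n => Filter.Eventually.of_forall (hhbd n)
      · exact hh0
    have : ‖∫ x, φ x ∂μ - ∫ x, φ x ∂ν‖ ≤ 0 := ge_of_tendsto' hlim hbound
    have := le_antisymm this (norm_nonneg _)
    rwa [norm_eq_zero, sub_eq_zero] at this
  -- conclude via ext on bounded continuous nonneg functions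
  apply ext_of_forall_lintegral_eq_of_IsFiniteMeasure
  intro g
  have hg : ∀ κ : Measure X, (∫⁻ x, (g x : ENNReal) ∂κ).toReal
      = ∫ x, ((g x : ℝ)) ∂κ := fun κ => BoundedContinuousFunction.toReal_lintegral_coe_eq_integral g κ
  have hC : Continuous (fun x => (g x : ℝ)) := NNReal.continuous_coe.comp g.continuous
  have heq := hkey ⟨fun x => (g x : ℝ), hC⟩
  have h1 := BoundedContinuousFunction.lintegral_lt_top_of_nnreal μ g
  have h2 := BoundedContinuousFunction.lintegral_lt_top_of_nnreal ν g
  have : (∫⁻ x, (g x : ENNReal) ∂μ).toReal = (∫⁻ x, (g x : ENNReal) ∂ν).toReal := by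
    rw [hg μ, hg ν]; exact heq
  exact (ENNReal.toReal_eq_toReal_iff' h1.ne h2.ne).mp this
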